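/- Let G' be a profinite group, G → G' a homomorphism of an abstract group with dense image, and X_• a simplicial G-set with finitely many G-orbits in each degree. Then the G'-completion X'_• := lim_{λ} X_•/G^λ (limit over subgroups G^λ of G that are preimages of open subgroups of G') is a simplicial profinite set with continuous G'-action, and any G-equivariant simplicial map from X_• to a simplicial profinite set Y_• with continuous geometric G'-action factors uniquely through X_• → X'_• via a continuous G'-equivariant map X'_• → Y_•. -/

import Mathlib

/-- A simplicial `G`-set: a simplicial set `X_•` (faces and degeneracies; the
simplicial identities are not recorded in this model) with a `G`-action by simplicial
automorphisms. -/
structure SimplicialGSet (G : Type) [Group G] where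
  /-- The set of `n`-simplices. -/
  X : ℕ → Type
  /-- The face maps. -/
  face : ∀ n, Fin (n + 2) → X (n + 1) → X n
  /-- The degeneracy maps. -/
  degen : ∀ n, Fin (n + 1) → X n → X (n + 1)
  /-- The `G`-action in each degree. -/
  smul : ∀ n, G → X n → X n
  one_smul : ∀ n x, smul n 1 x = x
  mul_smul : ∀ n g h x, smul n (g * h) x = smul n g (smul n h x)
  face_smul : ∀ n i g x, face n i (smul (n + 1) g x) = smul n g (face n i x)
  degen_smul : ∀ n i g x, degen n i (smul n g x) = smul (n + 1) g (degen n i x)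

/-- A simplicial profinite set with a continuous geometric action of a topological
group `G'`: each set of `n`-simplices is a profinite space (compact, Hausdorff,
totally disconnected), the faces and degeneracies are continuous, and `G'` acts
continuously by simplicial automorphisms. -/
structure SimplicialProfiniteGSet (G' : Type) [Group G'] [TopologicalSpace G'] where
  /-- The profinite set of `n`-simplices. -/
  Y : ℕ → Type
  topY : ∀ n, TopologicalSpace (Y n)
  cptY : ∀ n, CompactSpace (Y n)
  t2Y : ∀ n, T2Space (Y n)
  tdY : ∀ n, TotallyDisconnectedSpace (Y n)
  face : ∀ n, Fin (n + 2) → Y (n + 1) → Y n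
  degen : ∀ n, Fin (n + 1) → Y n → Y (n + 1)
  face_cont : ∀ n i, Continuous (face n i)
  degen_cont : ∀ n i, Continuous (degen n i)
  smul : ∀ n, G' → Y n → Y n
  one_smul : ∀ n y, smul n 1 y = y
  mul_smul : ∀ n g h y, smul n (g * h) y = smul n g (smul n h y)
  smul_cont : ∀ n, Continuous fun p : G' × Y n => smul n p.1 p.2
  face_smul : ∀ n i g y, face n i (smul (n + 1) g y) = smul n g (face n i y)
  degen_smul : ∀ n i g y, degen n i (smul n g y) = smul (n + 1) g (degen n i y)

attribute [instance] SimplicialProfiniteGSet.topY SimplicialProfiniteGSet.cptY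
  SimplicialProfiniteGSet.t2Y SimplicialProfiniteGSet.tdY

section Completion

variable {G : Type} [Group G] {G' : Type} [Group G'] [TopologicalSpace G']
  (φ : G →* G') (M : SimplicialGSet G)

/-- The open subgroups of `G'`; the subgroups `G^λ ≤ G` of the tower defining the
completion are their preimages under `φ`. -/
def OpenSubgroups (G' : Type) [Group G'] [TopologicalSpace G'] : Type :=
  { U : Subgroup G' // IsOpen (U : Set G') }

/-- Two `n`-simplices are identified at level `U` if they differ by the action of an
element of `G^λ = φ⁻¹(U)`. -/
def levelRel (U : OpenSubgroups G') (n : ℕ) (x y : M.X n) : Prop :=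
  ∃ g : G, φ g ∈ U.1 ∧ M.smul n g x = y

/-- The quotient `X_n / G^λ` at level `U`. -/
def LevelQuot (U : OpenSubgroups G') (n : ℕ) : Type :=
  Quot (levelRel φ M U n)

instance (U : OpenSubgroups G') (n : ℕ) : TopologicalSpace (LevelQuot φ M U n) := ⊥

/-- The transition map `X_n / G^λ → X_n / G^μ` for `U ≤ V`. -/
def levelTrans {U V : OpenSubgroups G'} (h : U.1 ≤ V.1) (n : ℕ) :
    LevelQuot φ M U n → LevelQuot φ M V n :=
  Quot.lift (Quot.mk _) fun a b hab => by
    obtain ⟨g, hg, hs⟩ := hab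
    exact Quot.sound ⟨g, h hg, hs⟩

/-- The `G'`-completion `X'_• = lim_λ X_•/G^λ` of the simplicial `G`-set `X_•`:
in each degree, the inverse limit of the quotients of `X_n` by the subgroups
`G^λ = φ⁻¹(U)`, `U` an open subgroup of `G'`. -/
def CompletionX (n : ℕ) : Type :=
  { f : ∀ U : OpenSubgroups G', LevelQuot φ M U n //
      ∀ (U V : OpenSubgroups G') (h : U.1 ≤ V.1), levelTrans φ M h n (f U) = f V }

instance (n : ℕ) : TopologicalSpace (CompletionX φ M n) :=
  instTopologicalSpaceSubtype

/-- The canonical map `X_• → X'_•`. -/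
def toCompletion (n : ℕ) (x : M.X n) : CompletionX φ M n :=
  ⟨fun U => Quot.mk _ x, fun _ _ _ => rfl⟩

end Completion

section Helper1

variable {G : Type} [Group G] {G' : Type} [Group G'] [TopologicalSpace G']
  (φ : G →* G') (M : SimplicialGSet G)

theorem levelRel_equivalence (U : OpenSubgroups G') (n : ℕ) :
    Equivalence (levelRel φ M U n) := by
  constructor
  · exact fun x => ⟨1, by simp [U.1.one_mem], M.one_smul n x⟩
  · rintro x y ⟨g, hg, hs⟩
    refine ⟨g⁻¹, by simpa using U.1.inv_mem hg, ?_⟩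
    rw [← hs, ← M.mul_smul, inv_mul_cancel, M.one_smul]
  · rintro x y z ⟨g, hg, hs⟩ ⟨h, hh, ht⟩
    refine ⟨h * g, by rw [map_mul]; exact U.1.mul_mem hh hg, ?_⟩
    rw [M.mul_smul, hs, ht]

theorem levelRel_of_mk_eq {U : OpenSubgroups G'} {n : ℕ} {x y : M.X n}
    (h : Quot.mk (levelRel φ M U n) x = Quot.mk (levelRel φ M U n) y) :
    levelRel φ M U n x y :=
  ((levelRel_equivalence φ M U n).eqvGen_iff).mp (Quot.eq.mp h)

instance (U : OpenSubgroups G') (n : ℕ) : DiscreteTopology (LevelQuot φ M U n) := ⟨rfl⟩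

/-- The intersection of two open subgroups. -/
def OSinf (U V : OpenSubgroups G') : OpenSubgroups G' :=
  ⟨U.1 ⊓ V.1, by rw [Subgroup.coe_inf]; exact U.2.inter V.2⟩

theorem OSinf_le_left (U V : OpenSubgroups G') : (OSinf U V).1 ≤ U.1 := inf_le_left
theorem OSinf_le_right (U V : OpenSubgroups G') : (OSinf U V).1 ≤ V.1 := inf_le_right

instance : Nonempty (OpenSubgroups G') :=
  ⟨⟨⊤, by rw [Subgroup.coe_top]; exact isOpen_univ⟩⟩

theorem exists_phi_mem (hdense : DenseRange φ) (γ : G') (U : OpenSubgroups G')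
    [ContinuousMul G'] : ∃ g : G, γ⁻¹ * φ g ∈ U.1 := by
  obtain ⟨g, hg⟩ := hdense.exists_mem_open (s := (fun x => γ⁻¹ * x) ⁻¹' (U.1 : Set G'))
    (U.2.preimage (continuous_mul_left γ⁻¹)) ⟨γ, by simp [U.1.one_mem]⟩
  exact ⟨g, hg⟩

theorem levelQuot_finite [IsTopologicalGroup G'] [CompactSpace G'] (hdense : DenseRange φ)
    (n : ℕ) (horb : Finite (Quot fun x y : M.X n => ∃ g : G, M.smul n g x = y))
    (U : OpenSubgroups G') : Finite (LevelQuot φ M U n) := by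
  have hfin : Finite (G' ⧸ U.1) := Subgroup.quotient_finite_of_isOpen U.1 U.2
  set Q := Quot fun x y : M.X n => ∃ g : G, M.smul n g x = y with hQ
  have hsel : ∀ c : G' ⧸ U.1, ∃ g : G, (Quotient.out c)⁻¹ * φ g ∈ U.1 := fun c =>
    exists_phi_mem φ hdense (Quotient.out c) U
  choose sel hselspec using hsel
  let F : Q × (G' ⧸ U.1) → LevelQuot φ M U n := fun p =>
    Quot.mk _ (M.smul n (sel p.2)⁻¹ (Quot.out p.1))
  have hsurj : Function.Surjective F := by
    intro y
    obtain ⟨x, rfl⟩ := Quot.exists_rep y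
    set q : Q := Quot.mk _ x with hq
    have horbrel : ∃ g : G, M.smul n g (Quot.out q) = x := by
      have hequiv : Equivalence fun x y : M.X n => ∃ g : G, M.smul n g x = y := by
        constructor
        · exact fun x => ⟨1, M.one_smul n x⟩
        · rintro x y ⟨g, rfl⟩
          exact ⟨g⁻¹, by rw [← M.mul_smul, inv_mul_cancel, M.one_smul]⟩
        · rintro x y z ⟨g, rfl⟩ ⟨h, rfl⟩
          exact ⟨h * g, M.mul_smul n h g x⟩
      exact hequiv.eqvGen_iff.mp (Quot.eq.mp (by rw [Quot.out_eq q]))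
    obtain ⟨g, hg⟩ := horbrel
    set c : G' ⧸ U.1 := QuotientGroup.mk (φ g)⁻¹ with hc
    refine ⟨⟨q, c⟩, ?_⟩
    have hmkout : QuotientGroup.mk (α := G') (s := U.1) ((φ g)⁻¹) = QuotientGroup.mk (Quotient.out c) := by
      rw [hc]; exact (Quotient.out_eq _).symm
    have hout : ((φ g)⁻¹)⁻¹ * Quotient.out c ∈ U.1 := QuotientGroup.eq.mp hmkout
    rw [inv_inv] at hout
    have hmem : φ (g * sel c) ∈ U.1 := by
      have h2 := hselspec c
      have : φ (g * sel c) = (φ g * Quotient.out c) * ((Quotient.out c)⁻¹ * φ (sel c)) := by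
        rw [map_mul]; group
      rw [this]
      exact U.1.mul_mem hout h2
    refine Quot.sound ⟨g * sel c, hmem, ?_⟩
    rw [← hg, ← M.mul_smul]
    congr 1
    group
  exact Finite.of_surjective F hsurj

end Helper1
section Helper2

variable {G : Type} [Group G] {G' : Type} [Group G'] [TopologicalSpace G']
  (φ : G →* G') (M : SimplicialGSet G)

theorem isOpen_normalCore [IsTopologicalGroup G'] [CompactSpace G'] (U : OpenSubgroups G') :
    IsOpen ((U.1.normalCore : Subgroup G') : Set G') := by
  have hfin : Finite (G' ⧸ U.1) := Subgroup.quotient_finite_of_isOpen U.1 U.2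
  have hmem : ∀ g : G', g ∈ U.1.normalCore ↔ ∀ b : G', b * g * b⁻¹ ∈ U.1 := fun g => Iff.rfl
  have hset : ((U.1.normalCore : Subgroup G') : Set G') =
      ⋂ c : G' ⧸ U.1, (fun g => (Quotient.out c)⁻¹ * g * Quotient.out c) ⁻¹' (U.1 : Set G') := by
    ext g
    simp only [Set.mem_iInter, Set.mem_preimage, SetLike.mem_coe, hmem]
    constructor
    · intro h c
      have := h (Quotient.out c)⁻¹
      rwa [inv_inv] at this
    · intro h b
      set c : G' ⧸ U.1 := QuotientGroup.mk b⁻¹ with hc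
      have hmk : QuotientGroup.mk (α := G') (s := U.1) (b⁻¹) = QuotientGroup.mk (Quotient.out c) := by
        rw [hc]; exact (Quotient.out_eq _).symm
      have hbu : (b⁻¹)⁻¹ * Quotient.out c ∈ U.1 := QuotientGroup.eq.mp hmk
      rw [inv_inv] at hbu
      have h2 := h c
      have key : b * g * b⁻¹ =
          (b * Quotient.out c) * ((Quotient.out c)⁻¹ * g * Quotient.out c) * (b * Quotient.out c)⁻¹ := by
        group
      rw [key]
      exact U.1.mul_mem (U.1.mul_mem hbu h2) (U.1.inv_mem hbu)
  rw [hset]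
  exact isOpen_iInter_of_finite fun c =>
    U.2.preimage ((continuous_mul_left _).mul continuous_const)

variable [IsTopologicalGroup G'] [CompactSpace G']

/-- The (open) normal core of an open subgroup. -/
def NC (U : OpenSubgroups G') : OpenSubgroups G' := ⟨U.1.normalCore, isOpen_normalCore U⟩

theorem NC_le (U : OpenSubgroups G') : (NC (G' := G') U).1 ≤ U.1 := U.1.normalCore_le

theorem NC_normal (U : OpenSubgroups G') : (NC (G' := G') U).1.Normal := U.1.normalCore_normal

/-- The transition maps compose. -/
theorem levelTrans_comp {U V W : OpenSubgroups G'} (h1 : U.1 ≤ V.1) (h2 : V.1 ≤ W.1)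
    (h3 : U.1 ≤ W.1) (n : ℕ) (q : LevelQuot φ M U n) :
    levelTrans φ M h2 n (levelTrans φ M h1 n q) = levelTrans φ M h3 n q :=
  Quot.inductionOn q fun _ => rfl

theorem levelTrans_mk {U V : OpenSubgroups G'} (h : U.1 ≤ V.1) (n : ℕ) (x : M.X n) :
    levelTrans φ M h n (Quot.mk _ x) = Quot.mk _ x := rfl

/-- The face map on a level quotient. -/
def levelFace (U : OpenSubgroups G') (n : ℕ) (i : Fin (n + 2)) :
    LevelQuot φ M U (n + 1) → LevelQuot φ M U n :=
  Quot.lift (fun x => Quot.mk _ (M.face n i x)) (by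
    rintro a b ⟨g, hg, hs⟩
    exact Quot.sound ⟨g, hg, by rw [← hs, M.face_smul]⟩)

/-- The degeneracy map on a level quotient. -/
def levelDegen (U : OpenSubgroups G') (n : ℕ) (i : Fin (n + 1)) :
    LevelQuot φ M U n → LevelQuot φ M U (n + 1) :=
  Quot.lift (fun x => Quot.mk _ (M.degen n i x)) (by
    rintro a b ⟨g, hg, hs⟩
    exact Quot.sound ⟨g, hg, by rw [← hs, M.degen_smul]⟩)

theorem levelTrans_levelFace {U V : OpenSubgroups G'} (h : U.1 ≤ V.1) (n : ℕ) (i : Fin (n + 2))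
    (q : LevelQuot φ M U (n + 1)) :
    levelTrans φ M h n (levelFace φ M U n i q) = levelFace φ M V n i (levelTrans φ M h (n + 1) q) :=
  Quot.inductionOn q fun _ => rfl

theorem levelTrans_levelDegen {U V : OpenSubgroups G'} (h : U.1 ≤ V.1) (n : ℕ) (i : Fin (n + 1))
    (q : LevelQuot φ M U n) :
    levelTrans φ M h (n + 1) (levelDegen φ M U n i q) =
      levelDegen φ M V n i (levelTrans φ M h n q) :=
  Quot.inductionOn q fun _ => rfl

/-- The face maps of the completion. -/
def faceC (n : ℕ) (i : Fin (n + 2)) (f : CompletionX φ M (n + 1)) : CompletionX φ M n :=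
  ⟨fun U => levelFace φ M U n i (f.1 U), fun U V h => by
    rw [levelTrans_levelFace, f.2 U V h]⟩

/-- The degeneracy maps of the completion. -/
def degenC (n : ℕ) (i : Fin (n + 1)) (f : CompletionX φ M n) : CompletionX φ M (n + 1) :=
  ⟨fun U => levelDegen φ M U n i (f.1 U), fun U V h => by
    rw [levelTrans_levelDegen, f.2 U V h]⟩

theorem faceC_cont (n : ℕ) (i : Fin (n + 2)) : Continuous (faceC φ M n i) := by
  apply Continuous.subtype_mk
  apply continuous_pi
  intro U
  have h1 : Continuous fun f : CompletionX φ M (n + 1) => f.1 U :=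
    (continuous_apply U).comp continuous_subtype_val
  exact continuous_of_discreteTopology.comp h1

theorem degenC_cont (n : ℕ) (i : Fin (n + 1)) : Continuous (degenC φ M n i) := by
  apply Continuous.subtype_mk
  apply continuous_pi
  intro U
  have h1 : Continuous fun f : CompletionX φ M n => f.1 U :=
    (continuous_apply U).comp continuous_subtype_val
  exact continuous_of_discreteTopology.comp h1

theorem faceC_toCompletion (n : ℕ) (i : Fin (n + 2)) (x : M.X (n + 1)) :
    faceC φ M n i (toCompletion φ M (n + 1) x) = toCompletion φ M n (M.face n i x) := rfl

theorem degenC_toCompletion (n : ℕ) (i : Fin (n + 1)) (x : M.X n) :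
    degenC φ M n i (toCompletion φ M n x) = toCompletion φ M (n + 1) (M.degen n i x) := rfl

/-- The action of `g ∈ G` on a level quotient at a level normal in `G'`. -/
def levelSmul (U : OpenSubgroups G') (hU : U.1.Normal) (n : ℕ) (g : G) :
    LevelQuot φ M U n → LevelQuot φ M U n :=
  Quot.lift (fun x => Quot.mk _ (M.smul n g x)) (by
    rintro a b ⟨k, hk, hs⟩
    refine Quot.sound ⟨g * k * g⁻¹, ?_, ?_⟩
    · have : φ (g * k * g⁻¹) = φ g * φ k * (φ g)⁻¹ := by
        rw [map_mul, map_mul, map_inv]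
      rw [this]
      exact hU.conj_mem _ hk (φ g)
    · rw [← hs, ← M.mul_smul, ← M.mul_smul]
      congr 1
      group)

end Helper2
section Helper3

open Topology Filter

variable {G : Type} [Group G] {G' : Type} [Group G'] [TopologicalSpace G']
  (φ : G →* G') (M : SimplicialGSet G)
  [IsTopologicalGroup G'] [CompactSpace G']

/-- A choice of `g ∈ G` with `φ g ∈ γ ⬝ NC U`. -/
noncomputable def gsel (hdense : DenseRange φ) (γ : G') (U : OpenSubgroups G') : G :=
  Classical.choose (exists_phi_mem φ hdense γ (NC U))

theorem gsel_spec (hdense : DenseRange φ) (γ : G') (U : OpenSubgroups G') :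
    γ⁻¹ * φ (gsel φ hdense γ U) ∈ (NC (G' := G') U).1 :=
  Classical.choose_spec (exists_phi_mem φ hdense γ (NC U))

theorem levelSmul_congr {U : OpenSubgroups G'} (hU : U.1.Normal) {γ : G'} {g g' : G}
    (hg : γ⁻¹ * φ g ∈ U.1) (hg' : γ⁻¹ * φ g' ∈ U.1) (n : ℕ) (q : LevelQuot φ M U n) :
    levelSmul φ M U hU n g q = levelSmul φ M U hU n g' q := by
  refine Quot.inductionOn q fun x => Quot.sound ⟨g' * g⁻¹, ?_, ?_⟩
  · have hmem : (γ⁻¹ * φ g') * (γ⁻¹ * φ g)⁻¹ ∈ U.1 := U.1.mul_mem hg' (U.1.inv_mem hg)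
    have heq : φ (g' * g⁻¹) = γ * ((γ⁻¹ * φ g') * (γ⁻¹ * φ g)⁻¹) * γ⁻¹ := by
      rw [map_mul, map_inv]; group
    rw [heq]
    exact hU.conj_mem _ hmem γ
  · rw [← M.mul_smul]
    congr 1
    group

theorem levelTrans_levelSmul {U V : OpenSubgroups G'} (hUV : U.1 ≤ V.1) (hU : U.1.Normal)
    (hV : V.1.Normal) (n : ℕ) (g : G) (q : LevelQuot φ M U n) :
    levelTrans φ M hUV n (levelSmul φ M U hU n g q) =
      levelSmul φ M V hV n g (levelTrans φ M hUV n q) :=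
  Quot.inductionOn q fun _ => rfl

/-- The `G'`-action on the completion. -/
noncomputable def smulC (hdense : DenseRange φ) (n : ℕ) (γ : G') (f : CompletionX φ M n) :
    CompletionX φ M n :=
  ⟨fun U => levelTrans φ M (NC_le U) n
      (levelSmul φ M (NC U) (NC_normal U) n (gsel φ hdense γ U) (f.1 (NC U))),
   fun U V hUV => by
     have hNC : (NC (G' := G') U).1 ≤ (NC (G' := G') V).1 := Subgroup.normalCore_mono hUV
     rw [levelTrans_comp φ M (NC_le U) hUV ((NC_le U).trans hUV),
       ← levelTrans_comp φ M hNC (NC_le V) ((NC_le U).trans hUV),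
       levelTrans_levelSmul φ M hNC (NC_normal U) (NC_normal V),
       f.2 (NC U) (NC V) hNC,
       levelSmul_congr φ M (NC_normal V) (hNC (gsel_spec φ hdense γ U))
         (gsel_spec φ hdense γ V)]⟩

theorem inf_normal {H K : Subgroup G'} (hH : H.Normal) (hK : K.Normal) : (H ⊓ K).Normal :=
  ⟨fun a ha b => Subgroup.mem_inf.mpr
    ⟨hH.conj_mem _ (Subgroup.mem_inf.mp ha).1 b, hK.conj_mem _ (Subgroup.mem_inf.mp ha).2 b⟩⟩

/-- Characterization of the action: at level `U`, the action of `γ` is given by any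
`g ∈ G` with `φ g ∈ γ ⬝ W` for a normal open subgroup `W ≤ U` at which `f` has a
representative. -/
theorem smulC_apply_mk (hdense : DenseRange φ) (n : ℕ) (γ : G') (f : CompletionX φ M n)
    (U : OpenSubgroups G') {W : OpenSubgroups G'} (hWn : W.1.Normal) (hWU : W.1 ≤ U.1)
    {g : G} {x : M.X n} (hg : γ⁻¹ * φ g ∈ W.1) (hx : f.1 W = Quot.mk _ x) :
    (smulC φ M hdense n γ f).1 U = Quot.mk _ (M.smul n g x) := by
  set W' : OpenSubgroups G' := OSinf (NC U) W with hW'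
  have hW'n : W'.1.Normal := inf_normal (NC_normal U) hWn
  obtain ⟨x', hx'⟩ := Quot.exists_rep (f.1 W')
  have h1 : f.1 (NC U) = Quot.mk _ x' := by
    rw [← f.2 W' (NC U) (OSinf_le_left _ _), ← hx']; rfl
  have h2 : f.1 W = Quot.mk _ x' := by
    rw [← f.2 W' W (OSinf_le_right _ _), ← hx']; rfl
  obtain ⟨k, hk, hkx⟩ : levelRel φ M W n x x' := levelRel_of_mk_eq φ M (hx.symm.trans h2)
  show levelTrans φ M (NC_le U) n
      (levelSmul φ M (NC U) (NC_normal U) n (gsel φ hdense γ U) (f.1 (NC U))) = _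
  rw [h1]
  show Quot.mk _ (M.smul n (gsel φ hdense γ U) x') = Quot.mk _ (M.smul n g x)
  set gs := gsel φ hdense γ U with hgs
  have hbs := gsel_spec φ hdense γ U
  rw [← hgs] at hbs
  refine Quot.sound ⟨g * (gs * k)⁻¹, ?_, ?_⟩
  · have heq : φ (g * (gs * k)⁻¹) =
        (γ * (γ⁻¹ * φ g) * γ⁻¹) * (γ * (φ k)⁻¹ * γ⁻¹) * (γ * (γ⁻¹ * φ gs)⁻¹ * γ⁻¹) := by
      rw [map_mul, map_inv, map_mul]; group
    rw [heq]
    refine U.1.mul_mem (U.1.mul_mem ?_ ?_) ?_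
    · exact hWU (hWn.conj_mem _ hg γ)
    · exact hWU (hWn.conj_mem _ (W.1.inv_mem hk) γ)
    · exact NC_le U ((NC_normal U).conj_mem _ ((NC U).1.inv_mem hbs) γ)
  · rw [← hkx, ← M.mul_smul, ← M.mul_smul]
    congr 1
    group

theorem smulC_one (hdense : DenseRange φ) (n : ℕ) (f : CompletionX φ M n) :
    smulC φ M hdense n 1 f = f := by
  refine Subtype.ext (funext fun U => ?_)
  obtain ⟨x, hx⟩ := Quot.exists_rep (f.1 (NC U))
  have hg := gsel_spec φ hdense 1 U
  rw [smulC_apply_mk φ M hdense n 1 f U (NC_normal U) (NC_le U) hg hx.symm]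
  have hfU : f.1 U = Quot.mk _ x := by
    rw [← f.2 (NC U) U (NC_le U), ← hx]; rfl
  rw [hfU]
  refine Quot.sound ⟨(gsel φ hdense 1 U)⁻¹, ?_, ?_⟩
  · rw [map_inv]
    refine U.1.inv_mem (NC_le U ?_)
    simpa using hg
  · rw [← M.mul_smul, inv_mul_cancel, M.one_smul]

theorem smulC_mul (hdense : DenseRange φ) (n : ℕ) (γ δ : G') (f : CompletionX φ M n) :
    smulC φ M hdense n (γ * δ) f = smulC φ M hdense n γ (smulC φ M hdense n δ f) := by
  refine Subtype.ext (funext fun U => ?_)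
  obtain ⟨x, hx⟩ := Quot.exists_rep (f.1 (NC U))
  set gδ := gsel φ hdense δ U with hgδ
  set gγ := gsel φ hdense γ U with hgγ
  have hδ := gsel_spec φ hdense δ U; rw [← hgδ] at hδ
  have hγ := gsel_spec φ hdense γ U; rw [← hgγ] at hγ
  have h1 : (smulC φ M hdense n δ f).1 (NC U) = Quot.mk _ (M.smul n gδ x) :=
    smulC_apply_mk φ M hdense n δ f (NC U) (NC_normal U) le_rfl hδ hx.symm
  have h2 : (smulC φ M hdense n γ (smulC φ M hdense n δ f)).1 U =
      Quot.mk _ (M.smul n gγ (M.smul n gδ x)) :=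
    smulC_apply_mk φ M hdense n γ _ U (NC_normal U) (NC_le U) hγ h1
  have hmul : (γ * δ)⁻¹ * φ (gγ * gδ) ∈ (NC (G' := G') U).1 := by
    have heq : (γ * δ)⁻¹ * φ (gγ * gδ) =
        (δ⁻¹ * (γ⁻¹ * φ gγ) * δ) * (δ⁻¹ * φ gδ) := by rw [map_mul]; group
    rw [heq]
    refine (NC U).1.mul_mem ?_ hδ
    have := (NC_normal U).conj_mem _ hγ δ⁻¹
    simpa using this
  have h3 : (smulC φ M hdense n (γ * δ) f).1 U = Quot.mk _ (M.smul n (gγ * gδ) x) :=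
    smulC_apply_mk φ M hdense n (γ * δ) f U (NC_normal U) (NC_le U) hmul hx.symm
  rw [h2, h3, M.mul_smul]

theorem smulC_phi (hdense : DenseRange φ) (n : ℕ) (g : G) (x : M.X n) :
    smulC φ M hdense n (φ g) (toCompletion φ M n x) = toCompletion φ M n (M.smul n g x) := by
  refine Subtype.ext (funext fun U => ?_)
  have hg : (φ g)⁻¹ * φ g ∈ (NC (G' := G') U).1 := by
    rw [inv_mul_cancel]; exact (NC U).1.one_mem
  exact smulC_apply_mk φ M hdense n (φ g) _ U (NC_normal U) (NC_le U) hg rfl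

theorem faceC_smulC (hdense : DenseRange φ) (n : ℕ) (i : Fin (n + 2)) (γ : G')
    (f : CompletionX φ M (n + 1)) :
    faceC φ M n i (smulC φ M hdense (n + 1) γ f) = smulC φ M hdense n γ (faceC φ M n i f) := by
  refine Subtype.ext (funext fun U => ?_)
  obtain ⟨x, hx⟩ := Quot.exists_rep (f.1 (NC U))
  set g := gsel φ hdense γ U with hg'
  have hγ := gsel_spec φ hdense γ U; rw [← hg'] at hγ
  have h1 : (smulC φ M hdense (n + 1) γ f).1 U = Quot.mk _ (M.smul (n + 1) g x) :=
    smulC_apply_mk φ M hdense (n + 1) γ f U (NC_normal U) (NC_le U) hγ hx.symm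
  have hfx : (faceC φ M n i f).1 (NC U) = Quot.mk _ (M.face n i x) := by
    show levelFace φ M (NC U) n i (f.1 (NC U)) = _
    rw [← hx]; rfl
  have h2 : (smulC φ M hdense n γ (faceC φ M n i f)).1 U =
      Quot.mk _ (M.smul n g (M.face n i x)) :=
    smulC_apply_mk φ M hdense n γ _ U (NC_normal U) (NC_le U) hγ hfx
  show levelFace φ M U n i ((smulC φ M hdense (n + 1) γ f).1 U) = _
  rw [h1, h2]
  show Quot.mk _ (M.face n i (M.smul (n + 1) g x)) = _
  rw [M.face_smul]

theorem degenC_smulC (hdense : DenseRange φ) (n : ℕ) (i : Fin (n + 1)) (γ : G')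
    (f : CompletionX φ M n) :
    degenC φ M n i (smulC φ M hdense n γ f) = smulC φ M hdense (n + 1) γ (degenC φ M n i f) := by
  refine Subtype.ext (funext fun U => ?_)
  obtain ⟨x, hx⟩ := Quot.exists_rep (f.1 (NC U))
  set g := gsel φ hdense γ U with hg'
  have hγ := gsel_spec φ hdense γ U; rw [← hg'] at hγ
  have h1 : (smulC φ M hdense n γ f).1 U = Quot.mk _ (M.smul n g x) :=
    smulC_apply_mk φ M hdense n γ f U (NC_normal U) (NC_le U) hγ hx.symm
  have hfx : (degenC φ M n i f).1 (NC U) = Quot.mk _ (M.degen n i x) := by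
    show levelDegen φ M (NC U) n i (f.1 (NC U)) = _
    rw [← hx]; rfl
  have h2 : (smulC φ M hdense (n + 1) γ (degenC φ M n i f)).1 U =
      Quot.mk _ (M.smul (n + 1) g (M.degen n i x)) :=
    smulC_apply_mk φ M hdense (n + 1) γ _ U (NC_normal U) (NC_le U) hγ hfx
  show levelDegen φ M U n i ((smulC φ M hdense n γ f).1 U) = _
  rw [h1, h2]
  show Quot.mk _ (M.degen n i (M.smul n g x)) = _
  rw [M.degen_smul]

theorem smulC_cont (hdense : DenseRange φ) (n : ℕ) :
    Continuous fun p : G' × CompletionX φ M n => smulC φ M hdense n p.1 p.2 := by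
  apply Continuous.subtype_mk
  apply continuous_pi
  intro U
  rw [continuous_iff_continuousAt]
  rintro ⟨γ₀, f₀⟩
  obtain ⟨x, hx⟩ := Quot.exists_rep (f₀.1 (NC U))
  set g₀ := gsel φ hdense γ₀ U with hg₀
  have hγ₀ := gsel_spec φ hdense γ₀ U; rw [← hg₀] at hγ₀
  have hval : ∀ p : G' × CompletionX φ M n, γ₀⁻¹ * p.1 ∈ (NC (G' := G') U).1 →
      p.2.1 (NC U) = f₀.1 (NC U) →
      (smulC φ M hdense n p.1 p.2).1 U = Quot.mk _ (M.smul n g₀ x) := by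
    rintro ⟨γ, f⟩ h1 h2
    have hg : γ⁻¹ * φ g₀ ∈ (NC (G' := G') U).1 := by
      have heq : γ⁻¹ * φ g₀ = (γ₀⁻¹ * γ)⁻¹ * (γ₀⁻¹ * φ g₀) := by group
      rw [heq]
      exact (NC U).1.mul_mem ((NC U).1.inv_mem h1) hγ₀
    exact smulC_apply_mk φ M hdense n γ f U (NC_normal U) (NC_le U) hg (h2.trans hx.symm)
  have hopen1 : IsOpen {γ : G' | γ₀⁻¹ * γ ∈ (NC (G' := G') U).1} :=
    (NC U).2.preimage (continuous_mul_left γ₀⁻¹)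
  have hopen2 : IsOpen {f : CompletionX φ M n | f.1 (NC U) = f₀.1 (NC U)} := by
    have hc : Continuous fun f : CompletionX φ M n => f.1 (NC U) :=
      (continuous_apply (NC U)).comp continuous_subtype_val
    exact (isOpen_discrete {f₀.1 (NC U)}).preimage hc
  have hmem : {γ : G' | γ₀⁻¹ * γ ∈ (NC (G' := G') U).1} ×ˢ
      {f : CompletionX φ M n | f.1 (NC U) = f₀.1 (NC U)} ∈ 𝓝 (γ₀, f₀) := by
    refine (hopen1.prod hopen2).mem_nhds ⟨?_, rfl⟩
    simp only [Set.mem_setOf_eq, inv_mul_cancel]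
    exact (NC U).1.one_mem
  have hev : (fun p : G' × CompletionX φ M n => (smulC φ M hdense n p.1 p.2).1 U)
      =ᶠ[𝓝 (γ₀, f₀)] fun _ => Quot.mk _ (M.smul n g₀ x) := by
    filter_upwards [hmem] with p hp
    exact hval p hp.1 hp.2
  exact ContinuousAt.congr continuousAt_const hev.symm

end Helper3
section Helper4

open Topology Filter

variable {G : Type} [Group G] {G' : Type} [Group G'] [TopologicalSpace G']
  (φ : G →* G') (M : SimplicialGSet G)

theorem isClosed_completion (n : ℕ) :
    IsClosed {f : ∀ U : OpenSubgroups G', LevelQuot φ M U n |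
      ∀ (U V : OpenSubgroups G') (h : U.1 ≤ V.1), levelTrans φ M h n (f U) = f V} := by
  have hset : {f : ∀ U : OpenSubgroups G', LevelQuot φ M U n |
      ∀ (U V : OpenSubgroups G') (h : U.1 ≤ V.1), levelTrans φ M h n (f U) = f V} =
      ⋂ (U : OpenSubgroups G') (V : OpenSubgroups G') (h : U.1 ≤ V.1),
        {f : ∀ U : OpenSubgroups G', LevelQuot φ M U n | levelTrans φ M h n (f U) = f V} := by
    ext f; simp [Set.mem_iInter]
  rw [hset]
  refine isClosed_iInter fun U => isClosed_iInter fun V => isClosed_iInter fun h => ?_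
  have h1 : Continuous fun f : ∀ U : OpenSubgroups G', LevelQuot φ M U n =>
      levelTrans φ M h n (f U) := continuous_of_discreteTopology.comp (continuous_apply U)
  exact isClosed_eq h1 (continuous_apply V)

theorem completion_profinite [IsTopologicalGroup G'] [CompactSpace G'] (hdense : DenseRange φ)
    (n : ℕ) (horb : Finite (Quot fun x y : M.X n => ∃ g : G, M.smul n g x = y)) :
    CompactSpace (CompletionX φ M n) ∧ T2Space (CompletionX φ M n) ∧
      TotallyDisconnectedSpace (CompletionX φ M n) := by
  haveI : ∀ U : OpenSubgroups G', Finite (LevelQuot φ M U n) := fun U =>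
    levelQuot_finite φ M hdense n horb U
  refine ⟨?_, ?_, ?_⟩
  · exact isCompact_iff_compactSpace.mp (IsClosed.isCompact (isClosed_completion φ M n))
  · exact Topology.IsEmbedding.t2Space
      (Y := ∀ U : OpenSubgroups G', LevelQuot φ M U n) Topology.IsEmbedding.subtypeVal
  · exact Subtype.totallyDisconnectedSpace
      (α := ∀ U : OpenSubgroups G', LevelQuot φ M U n)

theorem eq_one_of_forall_mem [IsTopologicalGroup G'] [CompactSpace G'] [T2Space G']
    [TotallyDisconnectedSpace G'] {w : G'} (hw : ∀ U : OpenSubgroups G', w ∈ U.1) : w = 1 := by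
  by_contra hne
  obtain ⟨C, hC, h1C, hwC⟩ := exists_isClopen_of_totally_separated
    (show (1 : G') ≠ w from fun h => hne h.symm)
  obtain ⟨H, hH⟩ := IsTopologicalGroup.exist_openSubgroup_sub_clopen_nhds_of_one hC h1C
  exact hwC (hH (hw ⟨H.toSubgroup, H.isOpen⟩))

theorem isOpen_finsetInf (I : Finset (OpenSubgroups G')) :
    IsOpen (((I.inf fun V : OpenSubgroups G' => V.1) : Subgroup G') : Set G') := by
  classical
  induction I using Finset.induction_on with
  | empty =>
      rw [Finset.inf_empty]
      rw [show (((⊤ : Subgroup G') : Subgroup G') : Set G') = Set.univ from Subgroup.coe_top]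
      exact isOpen_univ
  | insert a s _ ih =>
      rw [Finset.inf_insert, Subgroup.coe_inf]
      exact a.2.inter ih

theorem exists_basic_nhd (n : ℕ) (y : CompletionX φ M n) {O : Set (CompletionX φ M n)}
    (hO : IsOpen O) (hy : y ∈ O) :
    ∃ U : OpenSubgroups G', ∀ y' : CompletionX φ M n, y'.1 U = y.1 U → y' ∈ O := by
  classical
  obtain ⟨T, hT, hTO⟩ := isOpen_induced_iff.mp hO
  obtain ⟨I, u, hu, hsub⟩ := isOpen_pi_iff.mp hT y.1 (by rw [← hTO] at hy; exact hy)
  have hinf : IsOpen ((I.inf (fun V : OpenSubgroups G' => V.1) : Subgroup G') : Set G') :=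
    isOpen_finsetInf I
  refine ⟨⟨I.inf (fun V : OpenSubgroups G' => V.1), hinf⟩, fun y' hy' => ?_⟩
  rw [← hTO]
  refine hsub ?_
  rw [Set.mem_pi]
  intro V hV
  have hle : (⟨I.inf (fun V : OpenSubgroups G' => V.1), hinf⟩ : OpenSubgroups G').1 ≤ V.1 :=
    Finset.inf_le hV
  have hcomp : y'.1 V = y.1 V := by
    rw [← y'.2 _ V hle, ← y.2 _ V hle, hy']
  rw [hcomp]
  exact (hu V hV).2

theorem denseRange_toCompletion (n : ℕ) : DenseRange (toCompletion φ M n) := by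
  intro y
  rw [mem_closure_iff]
  intro O hO hyO
  obtain ⟨U, hU⟩ := exists_basic_nhd φ M n y hO hyO
  obtain ⟨x, hx⟩ := Quot.exists_rep (y.1 U)
  exact ⟨toCompletion φ M n x, hU _ hx, Set.mem_range_self x⟩

/-- The approximating sets for the extension of a map to the completion. -/
def Sset {Y : Type} (n : ℕ) (fm : M.X n → Y) (y : CompletionX φ M n)
    (U : OpenSubgroups G') : Set Y :=
  fm '' {x | Quot.mk (levelRel φ M U n) x = y.1 U}

theorem Sset_nonempty {Y : Type} (n : ℕ) (fm : M.X n → Y) (y : CompletionX φ M n)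
    (U : OpenSubgroups G') : (Sset φ M n fm y U).Nonempty := by
  obtain ⟨x, hx⟩ := Quot.exists_rep (y.1 U)
  exact ⟨fm x, x, hx, rfl⟩

theorem Sset_mono {Y : Type} (n : ℕ) (fm : M.X n → Y) (y : CompletionX φ M n)
    {U V : OpenSubgroups G'} (h : U.1 ≤ V.1) : Sset φ M n fm y U ⊆ Sset φ M n fm y V := by
  rintro _ ⟨x, hx, rfl⟩
  refine ⟨x, ?_, rfl⟩
  show Quot.mk _ x = y.1 V
  rw [← y.2 U V h, ← hx]
  rfl

theorem Sset_congr {Y : Type} (n : ℕ) (fm : M.X n → Y) (y y' : CompletionX φ M n)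
    (U : OpenSubgroups G') (h : y.1 U = y'.1 U) : Sset φ M n fm y U = Sset φ M n fm y' U := by
  unfold Sset
  rw [h]

end Helper4
section Helper5

open Topology Filter

variable {G : Type} [Group G] {G' : Type} [Group G'] [TopologicalSpace G']
  (φ : G →* G') (M : SimplicialGSet G)
  [IsTopologicalGroup G'] [CompactSpace G'] [T2Space G'] [TotallyDisconnectedSpace G']
  (Nt : SimplicialProfiniteGSet G')

theorem closure_Sset_subset_orbit (n : ℕ) (fm : M.X n → Nt.Y n)
    (hsm : ∀ g x, fm (M.smul n g x) = Nt.smul n (φ g) (fm x)) (y : CompletionX φ M n)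
    (U : OpenSubgroups G') {x₀ : M.X n} (hx₀ : Quot.mk (levelRel φ M U n) x₀ = y.1 U) :
    closure (Sset φ M n fm y U) ⊆ (fun γ => Nt.smul n γ (fm x₀)) '' (U.1 : Set G') := by
  have hcont : Continuous fun γ : G' => Nt.smul n γ (fm x₀) :=
    (Nt.smul_cont n).comp (continuous_id.prodMk continuous_const)
  have hcpt : IsCompact ((fun γ => Nt.smul n γ (fm x₀)) '' (U.1 : Set G')) :=
    ((Subgroup.isClosed_of_isOpen U.1 U.2).isCompact).image hcont
  refine closure_minimal ?_ hcpt.isClosed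
  rintro _ ⟨x, hx, rfl⟩
  obtain ⟨k, hk, hkx⟩ : levelRel φ M U n x₀ x := levelRel_of_mk_eq φ M (hx₀.trans hx.symm)
  exact ⟨φ k, hk, by rw [← hkx, hsm]⟩

theorem directed_closure_Sset (n : ℕ) (fm : M.X n → Nt.Y n) (y : CompletionX φ M n) :
    Directed (· ⊇ ·) fun U : OpenSubgroups G' => closure (Sset φ M n fm y U) := fun U V =>
  ⟨OSinf U V, closure_mono (Sset_mono φ M n fm y (OSinf_le_left U V)),
    closure_mono (Sset_mono φ M n fm y (OSinf_le_right U V))⟩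

theorem nonempty_iInter_closure_Sset (n : ℕ) (fm : M.X n → Nt.Y n) (y : CompletionX φ M n) :
    (⋂ U : OpenSubgroups G', closure (Sset φ M n fm y U)).Nonempty :=
  IsCompact.nonempty_iInter_of_directed_nonempty_isCompact_isClosed _
    (directed_closure_Sset φ M Nt n fm y)
    (fun U => (Sset_nonempty φ M n fm y U).closure)
    (fun _ => isClosed_closure.isCompact)
    (fun _ => isClosed_closure)

theorem uniquePt (n : ℕ) (fm : M.X n → Nt.Y n)
    (hsm : ∀ g x, fm (M.smul n g x) = Nt.smul n (φ g) (fm x)) (y : CompletionX φ M n)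
    {p q : Nt.Y n} (hp : ∀ U : OpenSubgroups G', p ∈ closure (Sset φ M n fm y U))
    (hq : ∀ U : OpenSubgroups G', q ∈ closure (Sset φ M n fm y U)) : p = q := by
  have key : ∀ U : OpenSubgroups G', ∃ w, w ∈ (U.1 : Set G') ∧ Nt.smul n w p = q := by
    intro U
    obtain ⟨x₀, hx₀⟩ := Quot.exists_rep (y.1 U)
    obtain ⟨u, hu, hup⟩ := closure_Sset_subset_orbit φ M Nt n fm hsm y U hx₀ (hp U)
    obtain ⟨v, hv, hvq⟩ := closure_Sset_subset_orbit φ M Nt n fm hsm y U hx₀ (hq U)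
    refine ⟨v * u⁻¹, U.1.mul_mem hv (U.1.inv_mem hu), ?_⟩
    rw [← hup, ← hvq, ← Nt.mul_smul]
    congr 1
    group
  set K : OpenSubgroups G' → Set G' :=
    fun U => (U.1 : Set G') ∩ {w | Nt.smul n w p = q} with hK
  have hKcl : ∀ U, IsClosed (K U) := by
    intro U
    refine (Subgroup.isClosed_of_isOpen U.1 U.2).inter ?_
    have hc : Continuous fun w : G' => Nt.smul n w p :=
      (Nt.smul_cont n).comp (continuous_id.prodMk continuous_const)
    exact isClosed_eq hc continuous_const
  have hKne : ∀ U, (K U).Nonempty := by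
    intro U
    obtain ⟨w, hw1, hw2⟩ := key U
    exact ⟨w, hw1, hw2⟩
  have hKdir : Directed (· ⊇ ·) K := by
    intro U V
    refine ⟨OSinf U V, ?_, ?_⟩
    · exact fun w hw => ⟨OSinf_le_left U V hw.1, hw.2⟩
    · exact fun w hw => ⟨OSinf_le_right U V hw.1, hw.2⟩
  obtain ⟨w, hw⟩ := IsCompact.nonempty_iInter_of_directed_nonempty_isCompact_isClosed K hKdir
    hKne (fun U => (hKcl U).isCompact) hKcl
  have hwU : ∀ U : OpenSubgroups G', w ∈ U.1 := fun U => (Set.mem_iInter.mp hw U).1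
  have hw1 : w = 1 := eq_one_of_forall_mem hwU
  have := (Set.mem_iInter.mp hw ⟨⊤, by rw [Subgroup.coe_top]; exact isOpen_univ⟩).2
  rw [hw1] at this
  rw [← this, Nt.one_smul]

end Helper5
section Helper6

open Topology Filter

variable {G : Type} [Group G] {G' : Type} [Group G'] [TopologicalSpace G']
  (φ : G →* G') (M : SimplicialGSet G)
  [IsTopologicalGroup G'] [CompactSpace G'] [T2Space G'] [TotallyDisconnectedSpace G']

theorem univ_factor (hdense : DenseRange φ) (Nt : SimplicialProfiniteGSet G')
    (fmap : ∀ n, M.X n → Nt.Y n)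
    (hface : ∀ n i x, fmap n (M.face n i x) = Nt.face n i (fmap (n + 1) x))
    (hdegen : ∀ n i x, fmap (n + 1) (M.degen n i x) = Nt.degen n i (fmap n x))
    (hsmul : ∀ n g x, fmap n (M.smul n g x) = Nt.smul n (φ g) (fmap n x)) :
    ∃! f' : ∀ n, CompletionX φ M n → Nt.Y n,
      (∀ n, Continuous (f' n)) ∧
      (∀ n x, f' n (toCompletion φ M n x) = fmap n x) ∧
      (∀ n g y, f' n (smulC φ M hdense n g y) = Nt.smul n g (f' n y)) ∧
      (∀ n i y, f' n (faceC φ M n i y) = Nt.face n i (f' (n + 1) y)) ∧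
      (∀ n i y, f' (n + 1) (degenC φ M n i y) = Nt.degen n i (f' n y)) := by
  classical
  have hex : ∀ n (y : CompletionX φ M n),
      (⋂ U : OpenSubgroups G', closure (Sset φ M n (fmap n) y U)).Nonempty :=
    fun n y => nonempty_iInter_closure_Sset φ M Nt n (fmap n) y
  choose f' hf' using fun n (y : CompletionX φ M n) => hex n y
  have hmem : ∀ n (y : CompletionX φ M n) (U : OpenSubgroups G'),
      f' n y ∈ closure (Sset φ M n (fmap n) y U) := fun n y U =>
    Set.mem_iInter.mp (hf' n y) U
  have huniq : ∀ n (y : CompletionX φ M n) (p : Nt.Y n),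
      (∀ U : OpenSubgroups G', p ∈ closure (Sset φ M n (fmap n) y U)) → p = f' n y :=
    fun n y p hp => uniquePt φ M Nt n (fmap n) (hsmul n) y hp (hmem n y)
  -- toCompletion compatibility
  have hcomp : ∀ n x, f' n (toCompletion φ M n x) = fmap n x := by
    intro n x
    refine (huniq n (toCompletion φ M n x) (fmap n x) fun U => subset_closure ⟨x, rfl, rfl⟩).symm
  -- continuity
  have hcont : ∀ n, Continuous (f' n) := by
    intro n
    rw [continuous_iff_continuousAt]
    intro y
    rw [continuousAt_def]
    intro A hA
    obtain ⟨W, hWA, hWopen, hfW⟩ := mem_nhds_iff.mp hA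
    have hdisj : (Wᶜ ∩ ⋂ U : OpenSubgroups G', closure (Sset φ M n (fmap n) y U)) = ∅ := by
      rw [Set.eq_empty_iff_forall_notMem]
      rintro p ⟨hpW, hpI⟩
      refine hpW ?_
      rw [huniq n y p (Set.mem_iInter.mp hpI)]
      exact hfW
    obtain ⟨U, hU⟩ := IsCompact.elim_directed_family_closed
      (hWopen.isClosed_compl.isCompact) _ (fun _ => isClosed_closure) hdisj
      (directed_closure_Sset φ M Nt n (fmap n) y)
    have hsubW : closure (Sset φ M n (fmap n) y U) ⊆ W := by
      intro p hp
      by_contra hpW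
      exact Set.eq_empty_iff_forall_notMem.mp hU p ⟨hpW, hp⟩
    have hopen2 : IsOpen {y' : CompletionX φ M n | y'.1 U = y.1 U} := by
      have hc : Continuous fun y' : CompletionX φ M n => y'.1 U :=
        (continuous_apply U).comp continuous_subtype_val
      exact (isOpen_discrete {y.1 U}).preimage hc
    refine Filter.mem_of_superset (hopen2.mem_nhds rfl) ?_
    intro y' hy'
    have hSeq : Sset φ M n (fmap n) y' U = Sset φ M n (fmap n) y U :=
      Sset_congr φ M n (fmap n) y' y U hy'
    have : f' n y' ∈ closure (Sset φ M n (fmap n) y U) := by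
      rw [← hSeq]; exact hmem n y' U
    exact hWA (hsubW this)
  -- equivariance
  have hequiv : ∀ n g y, f' n (smulC φ M hdense n g y) = Nt.smul n g (f' n y) := by
    intro n γ y
    refine (huniq n _ (Nt.smul n γ (f' n y)) fun U => ?_).symm
    obtain ⟨x, hx⟩ := Quot.exists_rep (y.1 (NC U))
    set g := gsel φ hdense γ U with hg'
    have hγ := gsel_spec φ hdense γ U; rw [← hg'] at hγ
    have happ : (smulC φ M hdense n γ y).1 U = Quot.mk _ (M.smul n g x) :=
      smulC_apply_mk φ M hdense n γ y U (NC_normal U) (NC_le U) hγ hx.symm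
    -- image of the γ-coset of NC U lands in the closure
    have hOsub : (fun δ => Nt.smul n δ (fmap n x)) '' {δ : G' | γ⁻¹ * δ ∈ (NC (G' := G') U).1}
        ⊆ closure (Sset φ M n (fmap n) (smulC φ M hdense n γ y) U) := by
      rintro _ ⟨δ, hδ, rfl⟩
      have hopen : IsOpen {δ' : G' | γ⁻¹ * δ' ∈ (NC (G' := G') U).1} :=
        (NC U).2.preimage (continuous_mul_left γ⁻¹)
      have hdsub : {δ' : G' | γ⁻¹ * δ' ∈ (NC (G' := G') U).1} ⊆
          closure ({δ' : G' | γ⁻¹ * δ' ∈ (NC (G' := G') U).1} ∩ Set.range φ) :=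
        hdense.open_subset_closure_inter hopen
      have hmono : Continuous fun δ' : G' => Nt.smul n δ' (fmap n x) :=
        (Nt.smul_cont n).comp (continuous_id.prodMk continuous_const)
      have h1 : Nt.smul n δ (fmap n x) ∈ (fun δ' : G' => Nt.smul n δ' (fmap n x)) ''
          closure ({δ' : G' | γ⁻¹ * δ' ∈ (NC (G' := G') U).1} ∩ Set.range φ) :=
        ⟨δ, hdsub hδ, rfl⟩
      have h2 := image_closure_subset_closure_image hmono h1
      refine closure_mono ?_ h2
      rintro _ ⟨δ', ⟨hδ'1, g', rfl⟩, rfl⟩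
      refine ⟨M.smul n g' x, ?_, hsmul n g' x⟩
      show Quot.mk _ (M.smul n g' x) = (smulC φ M hdense n γ y).1 U
      rw [happ]
      refine Quot.sound ⟨g * g'⁻¹, ?_, ?_⟩
      · have heq : φ (g * g'⁻¹) = γ * ((γ⁻¹ * φ g) * (γ⁻¹ * φ g')⁻¹) * γ⁻¹ := by
          rw [map_mul, map_inv]; group
        rw [heq]
        exact NC_le U ((NC_normal U).conj_mem _
          ((NC U).1.mul_mem hγ ((NC U).1.inv_mem hδ'1)) γ)
      · rw [← M.mul_smul]
        congr 1
        group
    -- f' n y lies in the orbit of fmap n x under NC U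
    have horb : f' n y ∈ (fun k => Nt.smul n k (fmap n x)) '' ((NC (G' := G') U).1 : Set G') :=
      closure_Sset_subset_orbit φ M Nt n (fmap n) (hsmul n) y (NC U) hx (hmem n y (NC U))
    obtain ⟨k, hk, hkeq⟩ := horb
    refine hOsub ⟨γ * k, ?_, ?_⟩
    · show γ⁻¹ * (γ * k) ∈ (NC (G' := G') U).1
      rw [show γ⁻¹ * (γ * k) = k by group]
      exact hk
    · rw [← hkeq, ← Nt.mul_smul]
  -- face compatibility
  have hfacec : ∀ n i y, f' n (faceC φ M n i y) = Nt.face n i (f' (n + 1) y) := by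
    intro n i y
    refine (huniq n _ (Nt.face n i (f' (n + 1) y)) fun U => ?_).symm
    have h1 : f' (n + 1) y ∈ closure (Sset φ M (n + 1) (fmap (n + 1)) y U) := hmem (n + 1) y U
    have h2 : Nt.face n i (f' (n + 1) y) ∈
        Nt.face n i '' closure (Sset φ M (n + 1) (fmap (n + 1)) y U) :=
      Set.mem_image_of_mem _ h1
    have h3 := image_closure_subset_closure_image (Nt.face_cont n i) h2
    refine closure_mono ?_ h3
    rintro _ ⟨_, ⟨x, hx, rfl⟩, rfl⟩
    refine ⟨M.face n i x, ?_, hface n i x⟩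
    show Quot.mk _ (M.face n i x) = (faceC φ M n i y).1 U
    show Quot.mk _ (M.face n i x) = levelFace φ M U n i (y.1 U)
    rw [← hx]
    rfl
  -- degeneracy compatibility
  have hdegenc : ∀ n i y, f' (n + 1) (degenC φ M n i y) = Nt.degen n i (f' n y) := by
    intro n i y
    refine (huniq (n + 1) _ (Nt.degen n i (f' n y)) fun U => ?_).symm
    have h1 : f' n y ∈ closure (Sset φ M n (fmap n) y U) := hmem n y U
    have h2 : Nt.degen n i (f' n y) ∈
        Nt.degen n i '' closure (Sset φ M n (fmap n) y U) :=
      Set.mem_image_of_mem _ h1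
    have h3 := image_closure_subset_closure_image (Nt.degen_cont n i) h2
    refine closure_mono ?_ h3
    rintro _ ⟨_, ⟨x, hx, rfl⟩, rfl⟩
    refine ⟨M.degen n i x, ?_, hdegen n i x⟩
    show Quot.mk _ (M.degen n i x) = (degenC φ M n i y).1 U
    show Quot.mk _ (M.degen n i x) = levelDegen φ M U n i (y.1 U)
    rw [← hx]
    rfl
  refine ⟨f', ⟨hcont, hcomp, hequiv, hfacec, hdegenc⟩, ?_⟩
  rintro f₂ ⟨hc₂, hcomp₂, -, -, -⟩
  funext n
  refine Continuous.ext_on (denseRange_toCompletion φ M n) (hc₂ n) (hcont n) ?_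
  rintro _ ⟨x, rfl⟩
  rw [hcomp₂ n x, hcomp n x]

end Helper6

/-- **Universal property of the `G'`-completion of a simplicial `G`-set.**
Let `G'` be a profinite group, `φ : G → G'` a homomorphism from an abstract group with
dense image, and `X_•` a simplicial `G`-set with finitely many `G`-orbits in each
degree.  Then the completion `X'_• = lim_λ X_•/G^λ` (limit over the preimages `G^λ` of
the open subgroups of `G'`) is a simplicial profinite set carrying a continuous
geometric `G'`-action compatible with the `G`-action on `X_•`, and every
`G`-equivariant simplicial map from `X_•` to a simplicial profinite set `Y_•` with a
continuous geometric `G'`-action factors uniquely through `X_• → X'_•` via a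
continuous `G'`-equivariant simplicial map `X'_• → Y_•`. -/
theorem completion_universal_property
    {G : Type} [Group G] {G' : Type} [Group G'] [TopologicalSpace G']
    [IsTopologicalGroup G'] [CompactSpace G'] [T2Space G'] [TotallyDisconnectedSpace G']
    (φ : G →* G') (hdense : DenseRange φ) (M : SimplicialGSet G)
    (horb : ∀ n, Finite (Quot fun x y : M.X n => ∃ g : G, M.smul n g x = y)) :
    -- `X'_•` is a simplicial profinite set:
    (∀ n, CompactSpace (CompletionX φ M n) ∧ T2Space (CompletionX φ M n) ∧
      TotallyDisconnectedSpace (CompletionX φ M n)) ∧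
    ∃ (face' : ∀ n, Fin (n + 2) → CompletionX φ M (n + 1) → CompletionX φ M n)
      (degen' : ∀ n, Fin (n + 1) → CompletionX φ M n → CompletionX φ M (n + 1))
      (smul' : ∀ n, G' → CompletionX φ M n → CompletionX φ M n),
      -- the structure maps are continuous and extend those of `X_•`:
      (∀ n i, Continuous (face' n i)) ∧ (∀ n i, Continuous (degen' n i)) ∧
      (∀ n i x, face' n i (toCompletion φ M (n + 1) x) =
        toCompletion φ M n (M.face n i x)) ∧
      (∀ n i x, degen' n i (toCompletion φ M n x) =
        toCompletion φ M (n + 1) (M.degen n i x)) ∧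
      -- `G'` acts continuously and geometrically, extending the `G`-action:
      (∀ n x, smul' n 1 x = x) ∧
      (∀ n g h x, smul' n (g * h) x = smul' n g (smul' n h x)) ∧
      (∀ n, Continuous fun p : G' × CompletionX φ M n => smul' n p.1 p.2) ∧
      (∀ n g x, smul' n (φ g) (toCompletion φ M n x) =
        toCompletion φ M n (M.smul n g x)) ∧
      (∀ n i g x, face' n i (smul' (n + 1) g x) = smul' n g (face' n i x)) ∧
      (∀ n i g x, degen' n i (smul' n g x) = smul' (n + 1) g (degen' n i x)) ∧
      -- the universal property:
      (∀ (N : SimplicialProfiniteGSet G') (fmap : ∀ n, M.X n → N.Y n),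
        (∀ n i x, fmap n (M.face n i x) = N.face n i (fmap (n + 1) x)) →
        (∀ n i x, fmap (n + 1) (M.degen n i x) = N.degen n i (fmap n x)) →
        (∀ n g x, fmap n (M.smul n g x) = N.smul n (φ g) (fmap n x)) →
        ∃! f' : ∀ n, CompletionX φ M n → N.Y n,
          (∀ n, Continuous (f' n)) ∧
          (∀ n x, f' n (toCompletion φ M n x) = fmap n x) ∧
          (∀ n g y, f' n (smul' n g y) = N.smul n g (f' n y)) ∧
          (∀ n i y, f' n (face' n i y) = N.face n i (f' (n + 1) y)) ∧
          (∀ n i y, f' (n + 1) (degen' n i y) = N.degen n i (f' n y))) := by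
  constructor
  · exact fun n => completion_profinite φ M hdense n (horb n)
  · exact ⟨faceC φ M, degenC φ M, smulC φ M hdense,
      faceC_cont φ M, degenC_cont φ M,
      faceC_toCompletion φ M, degenC_toCompletion φ M,
      smulC_one φ M hdense, smulC_mul φ M hdense, smulC_cont φ M hdense,
      smulC_phi φ M hdense,
      fun n i g x => faceC_smulC φ M hdense n i g x,
      fun n i g x => degenC_smulC φ M hdense n i g x,
      fun Nt fmap h1 h2 h3 => univ_factor φ M hdense Nt fmap h1 h2 h3⟩
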